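/- Let Γ be a connected, locally finite oriented graph, M ≥ 1, and v a vertex of Γ. The marked oriented graph (Γ, v) is isomorphic (as marked oriented graph) to the connected component of (v, 0) in Γ ⊗ C_M if and only if the derangement of every closed path in the underlying graph of Γ is congruent to 0 modulo M. -/

import Mathlib

/-- An oriented (multi)graph à la Serre: vertices, edges, initial and terminal maps. -/
structure OGraph where
  V : Type
  E : Type
  ι : E → V
  τ : E → V

namespace OGraph

/-- Tensor product of oriented graphs. -/
def tensor (G H : OGraph) : OGraph where
  V := G.V × H.V
  E := G.E × H.E
  ι e := (G.ι e.1, H.ι e.2)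
  τ e := (G.τ e.1, H.τ e.2)

/-- Isomorphism of oriented graphs. -/
structure Iso (G H : OGraph) where
  fV : G.V ≃ H.V
  fE : G.E ≃ H.E
  hι : ∀ e, H.ι (fE e) = fV (G.ι e)
  hτ : ∀ e, H.τ (fE e) = fV (G.τ e)

/-- Weak adjacency: `u` and `v` are joined by an edge in some direction. -/
def Adj (G : OGraph) (u v : G.V) : Prop :=
  (∃ e, G.ι e = u ∧ G.τ e = v) ∨ (∃ e, G.ι e = v ∧ G.τ e = u)

/-- Weak reachability. -/
def Reach (G : OGraph) : G.V → G.V → Prop := Relation.ReflTransGen G.Adj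

/-- Weak connectedness. -/
def Connected (G : OGraph) : Prop := ∀ u v, G.Reach u v

/-- The connected component of a vertex, as an oriented graph. -/
def component (G : OGraph) (v : G.V) : OGraph where
  V := {w // G.Reach v w}
  E := {e // G.Reach v (G.ι e)}
  ι e := ⟨G.ι e.1, e.2⟩
  τ e := ⟨G.τ e.1, e.2.tail (Or.inl ⟨e.1, rfl, rfl⟩)⟩

/-- Paths in the underlying non-oriented graph, indexed by their signature:
`true` = an edge traversed positively, `false` = an edge traversed negatively. -/
inductive SPath (G : OGraph) : List Bool → G.V → G.V → Type
  | nil (v : G.V) : SPath G [] v v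
  | fwd {σ : List Bool} {z : G.V} (e : G.E) (p : SPath G σ (G.τ e) z) :
      SPath G (true :: σ) (G.ι e) z
  | bwd {σ : List Bool} {z : G.V} (e : G.E) (p : SPath G σ (G.ι e) z) :
      SPath G (false :: σ) (G.τ e) z

end OGraph

/-- Derangement of a signature: number of positive steps minus number of negative steps. -/
def der (σ : List Bool) : ℤ := (σ.count true : ℤ) - (σ.count false : ℤ)

/-- The oriented cycle of length `M` (for `M = 0`, `ZMod 0 = ℤ` and this is the
oriented bi-infinite line, corresponding to `M = ∞`). -/
@[reducible] def cycle (M : ℕ) : OGraph where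
  V := ZMod M
  E := ZMod M
  ι i := i
  τ i := i + 1

/-- Every closed path in the underlying graph of `G` has derangement ≡ 0 (mod M). -/
def DerZeroMod (G : OGraph) (M : ℕ) : Prop :=
  ∀ (σ : List Bool) (v : G.V), Nonempty (G.SPath σ v v) → ((der σ : ZMod M) = 0)

namespace OGraph

/-- Cast a path along equalities of endpoints. -/
def SPath.castV {G : OGraph} {σ : List Bool} {a a' b b' : G.V}
    (ha : a = a') (hb : b = b') (p : SPath G σ a b) : SPath G σ a' b' :=
  ha ▸ hb ▸ p

/-- Cast a path along an equality of signatures. -/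
def SPath.castS {G : OGraph} {σ σ' : List Bool} {a b : G.V}
    (h : σ = σ') (p : SPath G σ a b) : SPath G σ' a b := h ▸ p

/-- Concatenation of paths. -/
def SPath.append {G : OGraph} : ∀ {σ σ' : List Bool} {a b c : G.V},
    SPath G σ a b → SPath G σ' b c → SPath G (σ ++ σ') a c
  | _, _, _, _, _, .nil _, q => q
  | _, _, _, _, _, .fwd e p, q => .fwd e (p.append q)
  | _, _, _, _, _, .bwd e p, q => .bwd e (p.append q)

/-- Reversal of a path. -/
def SPath.reverse {G : OGraph} : ∀ {σ : List Bool} {a b : G.V},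
    SPath G σ a b → SPath G ((σ.map (fun s => !s)).reverse) b a
  | _, _, _, .nil a => .nil a
  | _, _, _, .fwd e p => SPath.castS (by simp) (p.reverse.append (.bwd e (.nil _)))
  | _, _, _, .bwd e p => SPath.castS (by simp) (p.reverse.append (.fwd e (.nil _)))

theorem spath_reach {G : OGraph} {σ : List Bool} {a b : G.V}
    (p : SPath G σ a b) : G.Reach a b := by
  induction p with
  | nil => exact Relation.ReflTransGen.refl
  | fwd e _ ih => exact Relation.ReflTransGen.head (Or.inl ⟨e, rfl, rfl⟩) ih
  | bwd e _ ih => exact Relation.ReflTransGen.head (Or.inr ⟨e, rfl, rfl⟩) ih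

theorem reach_spath {G : OGraph} {a b : G.V} (h : G.Reach a b) :
    ∃ σ, Nonempty (SPath G σ a b) := by
  induction h with
  | refl => exact ⟨[], ⟨.nil a⟩⟩
  | tail _ hadj ih =>
      obtain ⟨σ, ⟨p⟩⟩ := ih
      rcases hadj with ⟨e, he1, he2⟩ | ⟨e, he1, he2⟩
      · subst he1; subst he2; exact ⟨σ ++ [true], ⟨p.append (.fwd e (.nil _))⟩⟩
      · subst he1; subst he2; exact ⟨σ ++ [false], ⟨p.append (.bwd e (.nil _))⟩⟩

/-- Projection of a path in a tensor product onto the first factor. -/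
def SPath.proj {G H : OGraph} : ∀ {σ : List Bool} {a b : (G.tensor H).V},
    SPath (G.tensor H) σ a b → SPath G σ a.1 b.1
  | _, _, _, .nil a => .nil a.1
  | _, _, _, .fwd e p => .fwd e.1 p.proj
  | _, _, _, .bwd e p => .bwd e.1 p.proj

/-- Transport of a path along an isomorphism. -/
def SPath.mapIso {G H : OGraph} (f : Iso G H) : ∀ {σ : List Bool} {a b : G.V},
    SPath G σ a b → SPath H σ (f.fV a) (f.fV b)
  | _, _, _, .nil a => .nil _
  | _, _, _, .fwd e p =>
      SPath.castV (f.hι e) rfl (.fwd (f.fE e) (SPath.castV (f.hτ e).symm rfl (p.mapIso f)))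
  | _, _, _, .bwd e p =>
      SPath.castV (f.hτ e) rfl (.bwd (f.fE e) (SPath.castV (f.hι e).symm rfl (p.mapIso f)))

end OGraph

theorem der_nil : der [] = 0 := rfl

theorem der_cons_true (σ : List Bool) : der (true :: σ) = der σ + 1 := by
  simp [der, List.count_cons]; push_cast; ring

theorem der_cons_false (σ : List Bool) : der (false :: σ) = der σ - 1 := by
  simp [der, List.count_cons]; push_cast; ring

theorem der_append (σ σ' : List Bool) : der (σ ++ σ') = der σ + der σ' := by
  simp [der, List.count_append]; push_cast; ring

theorem der_revneg (σ : List Bool) : der ((σ.map (fun s => !s)).reverse) = - der σ := by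
  induction σ with
  | nil => simp [der]
  | cons s σ ih =>
      simp only [List.map_cons, List.reverse_cons, der_append, ih]
      cases s <;> simp [der_cons_true, der_cons_false, der] <;> push_cast <;> ring

/-- A "potential" increasing by 1 along each edge increases by `der σ` along a path. -/
theorem spath_chi {H : OGraph} {M : ℕ} (χ : H.V → ZMod M)
    (h : ∀ e, χ (H.τ e) = χ (H.ι e) + 1) {σ : List Bool} {a b : H.V}
    (p : H.SPath σ a b) : χ b = χ a + (der σ : ZMod M) := by
  induction p with
  | nil => simp [der]
  | fwd e _ ih => rw [ih, h e, der_cons_true]; push_cast; ring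
  | bwd e _ ih => rw [ih, h e, der_cons_false]; push_cast; ring

/-- Lifting a path in `G` to the tensor product with a cycle. -/
theorem spath_lift {G : OGraph} {M : ℕ} {σ : List Bool} {a b : G.V}
    (p : G.SPath σ a b) (i : ZMod M) :
    Nonempty ((G.tensor (cycle M)).SPath σ (a, i) (b, i + (der σ : ZMod M))) := by
  induction p generalizing i with
  | nil => exact ⟨OGraph.SPath.castV rfl (by simp [der]; rfl) (.nil _)⟩
  | @fwd σ z e _ ih =>
      obtain ⟨q⟩ := ih (i + 1)
      have hb : i + 1 + ((der σ : ℤ) : ZMod M) = i + ((der (true :: σ) : ℤ) : ZMod M) := by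
        rw [der_cons_true]; push_cast; ring
      refine ⟨OGraph.SPath.castV rfl ?_ (OGraph.SPath.fwd (G := G.tensor (cycle M)) (e, i) q)⟩
      rw [hb]
  | @bwd σ z e _ ih =>
      obtain ⟨q⟩ := ih (i - 1)
      have ha : (i - 1 + 1 : ZMod M) = i := by ring
      have hb : i - 1 + ((der σ : ℤ) : ZMod M) = i + ((der (false :: σ) : ℤ) : ZMod M) := by
        rw [der_cons_false]; push_cast; ring
      refine ⟨OGraph.SPath.castV ?_ ?_ (OGraph.SPath.bwd (G := G.tensor (cycle M)) (e, i - 1) q)⟩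
      · show ((G.τ e, i - 1 + 1) : G.V × ZMod M) = (G.τ e, i); rw [ha]
      · rw [hb]

/-- For a connected, locally finite oriented graph `Γ`, `M ≥ 1` and a
vertex `v`, the marked graph `(Γ, v)` is isomorphic as a marked oriented graph to the
connected component of `(v, 0)` in `Γ ⊗ C_M` iff every closed path in the underlying
graph of `Γ` has derangement divisible by `M`. -/
theorem marked_iso_component_tensor_cycle_iff (G : OGraph) (hG : G.Connected)
    (hloc₁ : ∀ v : G.V, Finite {e : G.E // G.ι e = v})
    (hloc₂ : ∀ v : G.V, Finite {e : G.E // G.τ e = v})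
    (M : ℕ) (hM : 1 ≤ M) (v : G.V) :
    (∃ i : OGraph.Iso G ((G.tensor (cycle M)).component (v, (0 : ZMod M))),
        i.fV v = ⟨(v, (0 : ZMod M)), Relation.ReflTransGen.refl⟩) ↔ DerZeroMod G M := by
  classical
  constructor
  · rintro ⟨f, -⟩ σ w ⟨p⟩
    have hstep : ∀ e : ((G.tensor (cycle M)).component (v, (0 : ZMod M))).E,
        (((G.tensor (cycle M)).component (v, (0 : ZMod M))).τ e).1.2 =
        (((G.tensor (cycle M)).component (v, (0 : ZMod M))).ι e).1.2 + 1 := fun e => rfl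
    have hc := spath_chi (H := (G.tensor (cycle M)).component (v, (0 : ZMod M)))
        (fun x => x.1.2) hstep (p.mapIso f)
    exact left_eq_add.mp hc
  · intro h
    have pathto : ∀ w : G.V, ∃ σ, Nonempty (G.SPath σ v w) :=
      fun w => OGraph.reach_spath (hG v w)
    set φ : G.V → ZMod M := fun w => ((der (pathto w).choose : ℤ) : ZMod M) with hφdef
    have keyφ : ∀ (σ : List Bool) (w : G.V),
        Nonempty (G.SPath σ v w) → ((der σ : ℤ) : ZMod M) = φ w := by
      rintro σ w ⟨p⟩
      obtain ⟨q⟩ := (pathto w).choose_spec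
      have hc := h _ v ⟨p.append q.reverse⟩
      rw [der_append, der_revneg] at hc
      push_cast at hc
      show ((der σ : ℤ) : ZMod M) = ((der (pathto w).choose : ℤ) : ZMod M)
      linear_combination hc
    have hmem : ∀ (w : G.V) (i : ZMod M),
        (G.tensor (cycle M)).Reach (v, (0 : ZMod M)) (w, i) ↔ i = φ w := by
      intro w i
      constructor
      · intro hr
        obtain ⟨σ, ⟨p⟩⟩ := OGraph.reach_spath hr
        have h1 := spath_chi (H := G.tensor (cycle M)) (fun x => x.2) (fun e => rfl) p
        have h2 := keyφ σ w ⟨p.proj⟩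
        rw [← h2]
        simpa using h1
      · intro hi
        obtain ⟨p⟩ := (pathto w).choose_spec
        obtain ⟨q⟩ := spath_lift (M := M) p 0
        have hr := OGraph.spath_reach q
        have h0 : (0 : ZMod M) + ((der (pathto w).choose : ℤ) : ZMod M) = i := by
          rw [zero_add, hi]
        rwa [h0] at hr
    have hφv : φ v = 0 := by
      have := keyφ [] v ⟨.nil v⟩
      simpa [der] using this.symm
    have hτφ : ∀ e : G.E, φ (G.τ e) = φ (G.ι e) + 1 := by
      intro e
      obtain ⟨p⟩ := (pathto (G.ι e)).choose_spec
      have h1 := keyφ _ _ ⟨p.append (.fwd e (.nil _))⟩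
      have h2 := keyφ _ _ ⟨p⟩
      rw [der_append] at h1
      rw [← h1, ← h2]
      have : der [true] = 1 := rfl
      rw [this]
      push_cast
      ring
    refine ⟨⟨?_, ?_, ?_, ?_⟩, ?_⟩
    · exact
        { toFun := fun w => ⟨(w, φ w), (hmem w (φ w)).mpr rfl⟩
          invFun := fun x => x.1.1
          left_inv := fun w => rfl
          right_inv := by
            rintro ⟨⟨w, i⟩, hr⟩
            have hi := (hmem w i).mp hr
            subst hi
            rfl }
    · exact
        { toFun := fun e => ⟨((e, φ (G.ι e)) : (G.tensor (cycle M)).E),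
            (hmem (G.ι e) (φ (G.ι e))).mpr rfl⟩
          invFun := fun x => x.1.1
          left_inv := fun e => rfl
          right_inv := by
            rintro ⟨⟨e, i⟩, hr⟩
            have hi := (hmem (G.ι e) i).mp hr
            subst hi
            rfl }
    · intro e
      rfl
    · intro e
      exact Subtype.ext (Prod.ext rfl (hτφ e).symm)
    · exact Subtype.ext (Prod.ext rfl hφv)
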